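/- Let (ℒ, ℒ̄) be a Toda Lax pair in the standard gauge and φ : ℤ → ℂ such that the constraint of type B, (T − T†)ℒ̄ = ℒ†(T − T†), holds. For k ≥ 1 set A_k = B_k − B̄_k. Then for every integer k ≥ 1 the following matrix identity holds: (T − T†)A_k + A_k†(T − T†) = Φ̄_k T − T Φ_k + Φ_k T† − T† Φ̄_k. -/

import Mathlib

/-- Pseudo-difference operators modeled as ℤ×ℤ matrices over ℂ. -/
abbrev PDO := ℤ → ℤ → ℂ

/-- Entrywise matrix product `(MN)(n,m) = Σ_k M(n,k) N(k,m)` (a `tsum`;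
it reduces to a finite sum whenever the supports make it finitely supported). -/
noncomputable def pmul (M N : PDO) : PDO := fun n m => ∑' k : ℤ, M n k * N k m

/-- The adjoint: `(M†)(n,m) = M(m,n)`. -/
def padj (M : PDO) : PDO := fun n m => M m n

/-- Matrix powers, with `ppow M 0` the identity matrix. -/
noncomputable def ppow (M : PDO) : ℕ → PDO
  | 0 => fun n m => if n = m then 1 else 0
  | k + 1 => pmul (ppow M k) M

/-- `(M)_{>0}`: the strictly upper-triangular (positive-diagonal) part. -/
def pplus (M : PDO) : PDO := fun n m => if n < m then M n m else 0

/-- `(M)_{<0}`: the strictly lower-triangular (negative-diagonal) part. -/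
def pminus (M : PDO) : PDO := fun n m => if m < n then M n m else 0

/-- `(M)_0`: the diagonal part. -/
def pzero (M : PDO) : PDO := fun n m => if n = m then M n m else 0

/-- `(M)_j`: the j-th diagonal part, with `(n, n+j)` entry `M(n, n+j)`. -/
def pdiag (j : ℤ) (M : PDO) : PDO := fun n m => if m = n + j then M n m else 0

/-- The shift matrix Λ: entries 1 iff `m = n+1`. -/
def shiftΛ : PDO := fun n m => if m = n + 1 then 1 else 0

/-- The inverse shift matrix Λ⁻¹ (transpose of Λ): entries 1 iff `m = n-1`. -/
def shiftΛinv : PDO := fun n m => if m = n - 1 then 1 else 0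

/-- Matrix `T` with entries `T(n,m) = e^{-φ(n)}` if `m = n+1`, else 0. -/
noncomputable def Tmat (φ : ℤ → ℂ) : PDO :=
  fun n m => if m = n + 1 then Complex.exp (-(φ n)) else 0

/-- A Toda Lax pair in the standard gauge: `L` is of lower type with
`L(n,m) = 0` for `m > n+1` and `L(n,n+1) = 1`; `L̄` is of upper type with
`L̄(n,m) = 0` for `m < n-1`. -/
def IsStandardPair (L Lb : PDO) : Prop :=
  (∀ n m : ℤ, n + 1 < m → L n m = 0) ∧ (∀ n : ℤ, L n (n + 1) = 1) ∧
  (∀ n m : ℤ, m < n - 1 → Lb n m = 0)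

/-- `B_k = (L^k)_{>0}`. -/
noncomputable def Bop (L : PDO) (k : ℕ) : PDO := pplus (ppow L k)

/-- `Φ_k = (L^k)_0`. -/
noncomputable def Phiop (L : PDO) (k : ℕ) : PDO := pzero (ppow L k)

/-- `B̄_k = (L̄^k)_{<0}`. -/
noncomputable def Bbarop (Lb : PDO) (k : ℕ) : PDO := pminus (ppow Lb k)

/-- `Φ̄_k = (L̄^k)_0`. -/
noncomputable def Phibarop (Lb : PDO) (k : ℕ) : PDO := pzero (ppow Lb k)

/-- `A_k = B_k - B̄_k`. -/
noncomputable def Aop (L Lb : PDO) (k : ℕ) : PDO := Bop L k - Bbarop Lb k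


noncomputable def tφ (φ : ℤ → ℂ) (n : ℤ) : ℂ := Complex.exp (-(φ n))

lemma T_mul_apply (φ : ℤ → ℂ) (M : PDO) (n m : ℤ) :
    pmul (Tmat φ) M n m = tφ φ n * M (n+1) m := by
  have : pmul (Tmat φ) M n m = ∑' k : ℤ, Tmat φ n k * M k m := rfl
  rw [this, tsum_eq_single (n+1)]
  · simp [Tmat, tφ]
  · intro k hk; simp [Tmat, hk]

lemma mul_T_apply (φ : ℤ → ℂ) (M : PDO) (n m : ℤ) :
    pmul M (Tmat φ) n m = M n (m-1) * tφ φ (m-1) := by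
  have : pmul M (Tmat φ) n m = ∑' k : ℤ, M n k * Tmat φ k m := rfl
  rw [this, tsum_eq_single (m-1)]
  · simp [Tmat, tφ]
  · intro k hk; have : m ≠ k + 1 := by omega
    simp [Tmat, this]

lemma Tadj_mul_apply (φ : ℤ → ℂ) (M : PDO) (n m : ℤ) :
    pmul (padj (Tmat φ)) M n m = tφ φ (n-1) * M (n-1) m := by
  have : pmul (padj (Tmat φ)) M n m = ∑' k : ℤ, Tmat φ k n * M k m := rfl
  rw [this, tsum_eq_single (n-1)]
  · simp [Tmat, tφ]
  · intro k hk; have : n ≠ k + 1 := by omega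
    simp [Tmat, this]

lemma mul_Tadj_apply (φ : ℤ → ℂ) (M : PDO) (n m : ℤ) :
    pmul M (padj (Tmat φ)) n m = M n (m+1) * tφ φ m := by
  have : pmul M (padj (Tmat φ)) n m = ∑' k : ℤ, M n k * Tmat φ m k := rfl
  rw [this, tsum_eq_single (m+1)]
  · simp [Tmat, tφ]
  · intro k hk; simp [Tmat, hk]

lemma S_mul_apply (φ : ℤ → ℂ) (M : PDO) (n m : ℤ) :
    pmul (Tmat φ - padj (Tmat φ)) M n m
      = tφ φ n * M (n+1) m - tφ φ (n-1) * M (n-1) m := by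
  have h : pmul (Tmat φ - padj (Tmat φ)) M n m
      = ∑' k : ℤ, (Tmat φ n k - Tmat φ k n) * M k m := rfl
  rw [h, tsum_eq_sum (s := {n+1, n-1}) ?_]
  · rw [Finset.sum_pair (by omega)]
    have h1 : n ≠ n + 1 + 1 := by omega
    have h2 : ¬ (n - 1 = n + 1) := by omega
    simp [Tmat, tφ, h1, h2]
    ring
  · intro k hk
    simp only [Finset.mem_insert, Finset.mem_singleton, not_or] at hk
    have h1 : k ≠ n + 1 := hk.1
    have h2 : n ≠ k + 1 := by omega
    simp [Tmat, h1, h2]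

lemma mul_S_apply (φ : ℤ → ℂ) (M : PDO) (n m : ℤ) :
    pmul M (Tmat φ - padj (Tmat φ)) n m
      = M n (m-1) * tφ φ (m-1) - M n (m+1) * tφ φ m := by
  have h : pmul M (Tmat φ - padj (Tmat φ)) n m
      = ∑' k : ℤ, M n k * (Tmat φ k m - Tmat φ m k) := rfl
  rw [h, tsum_eq_sum (s := {m-1, m+1}) ?_]
  · rw [Finset.sum_pair (by omega)]
    have h1 : ¬ (m = m + 1 + 1) := by omega
    have h2 : ¬ (m - 1 = m + 1) := by omega
    simp [Tmat, tφ, h1, h2]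
    ring
  · intro k hk
    simp only [Finset.mem_insert, Finset.mem_singleton, not_or] at hk
    have h1 : m ≠ k + 1 := by omega
    have h2 : k ≠ m + 1 := hk.2
    simp [Tmat, h1, h2]

def pdelta : PDO := fun n m => if n = m then 1 else 0

lemma ppow_zero (M : PDO) : ppow M 0 = pdelta := rfl
lemma ppow_succ (M : PDO) (k : ℕ) : ppow M (k+1) = pmul (ppow M k) M := rfl

lemma pmul_delta (M : PDO) : pmul M pdelta = M := by
  funext n m
  have h : pmul M pdelta n m = ∑' k : ℤ, M n k * pdelta k m := rfl
  rw [h, tsum_eq_single m]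
  · simp [pdelta]
  · intro k hk; simp [pdelta, hk]

lemma delta_pmul (M : PDO) : pmul pdelta M = M := by
  funext n m
  have h : pmul pdelta M n m = ∑' k : ℤ, pdelta n k * M k m := rfl
  rw [h, tsum_eq_single n]
  · simp [pdelta]
  · intro k hk; simp [pdelta, Ne.symm hk]

lemma padj_delta : padj pdelta = pdelta := by
  funext n m; simp [padj, pdelta, eq_comm]

lemma tsum_zero' {f : ℤ → ℂ} (h : ∀ j, f j = 0) : ∑' j, f j = 0 := by
  have := tsum_congr (L := SummationFilter.unconditional ℤ) h
  simpa using this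

lemma ppow_lower (L : PDO) (hL : ∀ n m : ℤ, n + 1 < m → L n m = 0) :
    ∀ (k : ℕ) (n m : ℤ), n + (k : ℤ) < m → ppow L k n m = 0 := by
  intro k
  induction k with
  | zero => intro n m h; simp only [ppow_zero, pdelta]; rw [if_neg (by omega)]
  | succ k ih =>
    intro n m h
    have h' : pmul (ppow L k) L n m = ∑' j : ℤ, ppow L k n j * L j m := rfl
    rw [ppow_succ, h']
    apply tsum_zero'
    intro j
    by_cases hj : n + (k : ℤ) < j
    · rw [ih n j hj, zero_mul]
    · rw [hL j m (by push_cast at h ⊢; omega), mul_zero]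

lemma ppow_upper (Lb : PDO) (hLb : ∀ n m : ℤ, m < n - 1 → Lb n m = 0) :
    ∀ (k : ℕ) (n m : ℤ), m < n - (k : ℤ) → ppow Lb k n m = 0 := by
  intro k
  induction k with
  | zero => intro n m h; simp only [ppow_zero, pdelta]; rw [if_neg (by omega)]
  | succ k ih =>
    intro n m h
    have h' : pmul (ppow Lb k) Lb n m = ∑' j : ℤ, ppow Lb k n j * Lb j m := rfl
    rw [ppow_succ, h']
    apply tsum_zero'
    intro j
    by_cases hj : j < n - (k : ℤ)
    · rw [ih n j hj, zero_mul]
    · rw [hLb j m (by push_cast at h ⊢; omega), mul_zero]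

lemma pmul_assoc_lower (A B C : PDO) (a b c : ℤ)
    (hA : ∀ n m : ℤ, n + a < m → A n m = 0)
    (hB : ∀ n m : ℤ, n + b < m → B n m = 0)
    (hC : ∀ n m : ℤ, n + c < m → C n m = 0) :
    pmul (pmul A B) C = pmul A (pmul B C) := by
  funext n m
  set s : Finset ℤ := Finset.Icc (m - c - b) (n + a) with hs
  set u : Finset ℤ := Finset.Icc (m - c) (n + a + b) with hu
  have hAB : ∀ i : ℤ, n + a + b < i → pmul A B n i = 0 := by
    intro i hi
    apply tsum_zero'
    intro j
    by_cases hj : n + a < j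
    · rw [hA n j hj, zero_mul]
    · rw [hB j i (by omega), mul_zero]
  have hBC : ∀ j : ℤ, j + b + c < m → pmul B C j m = 0 := by
    intro j hj
    apply tsum_zero'
    intro i
    by_cases hi : j + b < i
    · rw [hB j i hi, zero_mul]
    · rw [hC i m (by omega), mul_zero]
  have e1 : pmul (pmul A B) C n m = ∑ i ∈ u, pmul A B n i * C i m := by
    apply tsum_eq_sum
    intro i hi
    simp only [hu, Finset.mem_Icc, not_and, not_le] at hi
    by_cases h1 : i < m - c
    · rw [hC i m (by omega), mul_zero]
    · rw [hAB i (by omega), zero_mul]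
  have e3 : pmul A (pmul B C) n m = ∑ j ∈ s, A n j * pmul B C j m := by
    apply tsum_eq_sum
    intro j hj
    simp only [hs, Finset.mem_Icc, not_and, not_le] at hj
    by_cases h1 : j < m - c - b
    · rw [hBC j (by omega), mul_zero]
    · rw [hA n j (by omega), zero_mul]
  have e2 : ∀ i ∈ u, pmul A B n i * C i m = (∑ j ∈ s, A n j * B j i) * C i m := by
    intro i hi
    simp only [hu, Finset.mem_Icc] at hi
    congr 1
    apply tsum_eq_sum
    intro j hj
    simp only [hs, Finset.mem_Icc, not_and, not_le] at hj
    by_cases h1 : j < m - c - b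
    · rw [hB j i (by omega), mul_zero]
    · rw [hA n j (by omega), zero_mul]
  have e4 : ∀ j ∈ s, A n j * pmul B C j m = A n j * ∑ i ∈ u, B j i * C i m := by
    intro j hj
    simp only [hs, Finset.mem_Icc] at hj
    congr 1
    apply tsum_eq_sum
    intro i hi
    simp only [hu, Finset.mem_Icc, not_and, not_le] at hi
    by_cases h1 : i < m - c
    · rw [hC i m (by omega), mul_zero]
    · rw [hB j i (by omega), zero_mul]
  rw [e1, e3, Finset.sum_congr rfl e2, Finset.sum_congr rfl e4]
  simp only [Finset.sum_mul, Finset.mul_sum, mul_assoc]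
  exact Finset.sum_comm

lemma pmul_assoc_upper (A B C : PDO) (a b c : ℤ)
    (hA : ∀ n m : ℤ, m < n - a → A n m = 0)
    (hB : ∀ n m : ℤ, m < n - b → B n m = 0)
    (hC : ∀ n m : ℤ, m < n - c → C n m = 0) :
    pmul (pmul A B) C = pmul A (pmul B C) := by
  funext n m
  set s : Finset ℤ := Finset.Icc (n - a) (m + c + b) with hs
  set u : Finset ℤ := Finset.Icc (n - a - b) (m + c) with hu
  have hAB : ∀ i : ℤ, i < n - a - b → pmul A B n i = 0 := by
    intro i hi
    apply tsum_zero'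
    intro j
    by_cases hj : j < n - a
    · rw [hA n j hj, zero_mul]
    · rw [hB j i (by omega), mul_zero]
  have hBC : ∀ j : ℤ, m < j - b - c → pmul B C j m = 0 := by
    intro j hj
    apply tsum_zero'
    intro i
    by_cases hi : i < j - b
    · rw [hB j i hi, zero_mul]
    · rw [hC i m (by omega), mul_zero]
  have e1 : pmul (pmul A B) C n m = ∑ i ∈ u, pmul A B n i * C i m := by
    apply tsum_eq_sum
    intro i hi
    simp only [hu, Finset.mem_Icc, not_and, not_le] at hi
    by_cases h1 : m + c < i
    · rw [hC i m (by omega), mul_zero]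
    · rw [hAB i (by omega), zero_mul]
  have e3 : pmul A (pmul B C) n m = ∑ j ∈ s, A n j * pmul B C j m := by
    apply tsum_eq_sum
    intro j hj
    simp only [hs, Finset.mem_Icc, not_and, not_le] at hj
    by_cases h1 : m + c + b < j
    · rw [hBC j (by omega), mul_zero]
    · rw [hA n j (by omega), zero_mul]
  have e2 : ∀ i ∈ u, pmul A B n i * C i m = (∑ j ∈ s, A n j * B j i) * C i m := by
    intro i hi
    simp only [hu, Finset.mem_Icc] at hi
    congr 1
    apply tsum_eq_sum
    intro j hj
    simp only [hs, Finset.mem_Icc, not_and, not_le] at hj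
    by_cases h1 : m + c + b < j
    · rw [hB j i (by omega), mul_zero]
    · rw [hA n j (by omega), zero_mul]
  have e4 : ∀ j ∈ s, A n j * pmul B C j m = A n j * ∑ i ∈ u, B j i * C i m := by
    intro j hj
    simp only [hs, Finset.mem_Icc] at hj
    congr 1
    apply tsum_eq_sum
    intro i hi
    simp only [hu, Finset.mem_Icc, not_and, not_le] at hi
    by_cases h1 : m + c < i
    · rw [hC i m (by omega), mul_zero]
    · rw [hB j i (by omega), zero_mul]
  rw [e1, e3, Finset.sum_congr rfl e2, Finset.sum_congr rfl e4]
  simp only [Finset.sum_mul, Finset.mul_sum, mul_assoc]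
  exact Finset.sum_comm

lemma ppow_comm_lower (L : PDO) (hL : ∀ n m : ℤ, n + 1 < m → L n m = 0) (k : ℕ) :
    pmul L (ppow L k) = pmul (ppow L k) L := by
  induction k with
  | zero => rw [ppow_zero, pmul_delta, delta_pmul]
  | succ k ih =>
    rw [ppow_succ, ← pmul_assoc_lower L (ppow L k) L 1 (k : ℤ) 1 hL (ppow_lower L hL k) hL, ih]

lemma ppow_comm_upper (Lb : PDO) (hLb : ∀ n m : ℤ, m < n - 1 → Lb n m = 0) (k : ℕ) :
    pmul Lb (ppow Lb k) = pmul (ppow Lb k) Lb := by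
  induction k with
  | zero => rw [ppow_zero, pmul_delta, delta_pmul]
  | succ k ih =>
    rw [ppow_succ, ← pmul_assoc_upper Lb (ppow Lb k) Lb 1 (k : ℤ) 1 hLb (ppow_upper Lb hLb k) hLb, ih]

lemma constr_pow (L Lb : PDO) (φ : ℤ → ℂ)
    (hL : ∀ n m : ℤ, n + 1 < m → L n m = 0)
    (hLb : ∀ n m : ℤ, m < n - 1 → Lb n m = 0)
    (hconstr : pmul (Tmat φ - padj (Tmat φ)) Lb
      = pmul (padj L) (Tmat φ - padj (Tmat φ))) :
    ∀ k : ℕ, pmul (Tmat φ - padj (Tmat φ)) (ppow Lb k)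
      = pmul (padj (ppow L k)) (Tmat φ - padj (Tmat φ)) := by
  have hstar1 : ∀ a b : ℤ, tφ φ a * Lb (a+1) b - tφ φ (a-1) * Lb (a-1) b
      = L (b-1) a * tφ φ (b-1) - L (b+1) a * tφ φ b := by
    intro a b
    have h := congrFun (congrFun hconstr a) b
    rw [S_mul_apply, mul_S_apply] at h
    simpa [padj] using h
  intro k
  induction k with
  | zero => rw [ppow_zero, ppow_zero, padj_delta, pmul_delta, delta_pmul]
  | succ k ih =>
    have ihe : ∀ a b : ℤ, tφ φ a * ppow Lb k (a+1) b - tφ φ (a-1) * ppow Lb k (a-1) b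
        = ppow L k (b-1) a * tφ φ (b-1) - ppow L k (b+1) a * tφ φ b := by
      intro a b
      have h := congrFun (congrFun ih a) b
      rw [S_mul_apply, mul_S_apply] at h
      simpa [padj] using h
    have hW := ppow_lower L hL k
    have hWb := ppow_upper Lb hLb k
    funext n m
    set F : Finset ℤ := Finset.Icc (n - (k:ℤ) - 2) (m + (k:ℤ) + 2) with hF
    rw [ppow_succ, ppow_succ, S_mul_apply, mul_S_apply]
    simp only [padj]
    rw [← ppow_comm_upper Lb hLb k]
    have eL1 : pmul Lb (ppow Lb k) (n+1) m = ∑ j ∈ F, Lb (n+1) j * ppow Lb k j m := by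
      apply tsum_eq_sum
      intro j hj
      simp only [hF, Finset.mem_Icc, not_and, not_le] at hj
      rcases lt_or_ge j (n - (k:ℤ) - 2) with h1 | h1
      · rw [hLb (n+1) j (by omega), zero_mul]
      · rw [hWb j m (by have := hj h1; omega), mul_zero]
    have eL2 : pmul Lb (ppow Lb k) (n-1) m = ∑ j ∈ F, Lb (n-1) j * ppow Lb k j m := by
      apply tsum_eq_sum
      intro j hj
      simp only [hF, Finset.mem_Icc, not_and, not_le] at hj
      rcases lt_or_ge j (n - (k:ℤ) - 2) with h1 | h1
      · rw [hLb (n-1) j (by omega), zero_mul]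
      · rw [hWb j m (by have := hj h1; omega), mul_zero]
    have eR1 : pmul (ppow L k) L (m-1) n = ∑ j ∈ F, ppow L k (m-1) j * L j n := by
      apply tsum_eq_sum
      intro j hj
      simp only [hF, Finset.mem_Icc, not_and, not_le] at hj
      rcases lt_or_ge j (n - (k:ℤ) - 2) with h1 | h1
      · rw [hL j n (by omega), mul_zero]
      · rw [hW (m-1) j (by have := hj h1; omega), zero_mul]
    have eR2 : pmul (ppow L k) L (m+1) n = ∑ j ∈ F, ppow L k (m+1) j * L j n := by
      apply tsum_eq_sum
      intro j hj
      simp only [hF, Finset.mem_Icc, not_and, not_le] at hj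
      rcases lt_or_ge j (n - (k:ℤ) - 2) with h1 | h1
      · rw [hL j n (by omega), mul_zero]
      · rw [hW (m+1) j (by have := hj h1; omega), zero_mul]
    rw [eL1, eL2, eR1, eR2]
    calc tφ φ n * ∑ j ∈ F, Lb (n+1) j * ppow Lb k j m
          - tφ φ (n-1) * ∑ j ∈ F, Lb (n-1) j * ppow Lb k j m
        = ∑ j ∈ F, (tφ φ n * Lb (n+1) j - tφ φ (n-1) * Lb (n-1) j) * ppow Lb k j m := by
          rw [Finset.mul_sum, Finset.mul_sum, ← Finset.sum_sub_distrib]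
          exact Finset.sum_congr rfl (fun j _ => by ring)
      _ = ∑ j ∈ F, (L (j-1) n * tφ φ (j-1) - L (j+1) n * tφ φ j) * ppow Lb k j m :=
          Finset.sum_congr rfl (fun j _ => by rw [hstar1 n j])
      _ = (∑ j ∈ F, L (j-1) n * tφ φ (j-1) * ppow Lb k j m)
          - ∑ j ∈ F, L (j+1) n * tφ φ j * ppow Lb k j m := by
          rw [← Finset.sum_sub_distrib]
          exact Finset.sum_congr rfl (fun j _ => by ring)
      _ = (∑' j : ℤ, L (j-1) n * tφ φ (j-1) * ppow Lb k j m)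
          - ∑' j : ℤ, L (j+1) n * tφ φ j * ppow Lb k j m := by
          congr 1
          · refine (tsum_eq_sum ?_).symm
            intro j hj
            simp only [hF, Finset.mem_Icc, not_and, not_le] at hj
            rcases lt_or_ge j (n - (k:ℤ) - 2) with h1 | h1
            · rw [hL (j-1) n (by omega), zero_mul, zero_mul]
            · rw [hWb j m (by have := hj h1; omega), mul_zero]
          · refine (tsum_eq_sum ?_).symm
            intro j hj
            simp only [hF, Finset.mem_Icc, not_and, not_le] at hj
            rcases lt_or_ge j (n - (k:ℤ) - 2) with h1 | h1
            · rw [hL (j+1) n (by omega), zero_mul, zero_mul]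
            · rw [hWb j m (by have := hj h1; omega), mul_zero]
      _ = (∑' j : ℤ, L j n * tφ φ j * ppow Lb k (j+1) m)
          - ∑' j : ℤ, L j n * tφ φ (j-1) * ppow Lb k (j-1) m := by
          congr 1
          · have h := (Equiv.addRight (1:ℤ)).tsum_eq
              (fun j => L (j-1) n * tφ φ (j-1) * ppow Lb k j m)
            simp only [Equiv.coe_addRight, Int.add_sub_cancel] at h
            exact h.symm
          · have h := (Equiv.subRight (1:ℤ)).tsum_eq
              (fun j => L (j+1) n * tφ φ j * ppow Lb k j m)
            simp only [Equiv.subRight_apply, Int.sub_add_cancel] at h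
            exact h.symm
      _ = (∑ j ∈ F, L j n * tφ φ j * ppow Lb k (j+1) m)
          - ∑ j ∈ F, L j n * tφ φ (j-1) * ppow Lb k (j-1) m := by
          congr 1
          · apply tsum_eq_sum
            intro j hj
            simp only [hF, Finset.mem_Icc, not_and, not_le] at hj
            rcases lt_or_ge j (n - (k:ℤ) - 2) with h1 | h1
            · rw [hL j n (by omega), zero_mul, zero_mul]
            · rw [hWb (j+1) m (by have := hj h1; omega), mul_zero]
          · apply tsum_eq_sum
            intro j hj
            simp only [hF, Finset.mem_Icc, not_and, not_le] at hj
            rcases lt_or_ge j (n - (k:ℤ) - 2) with h1 | h1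
            · rw [hL j n (by omega), zero_mul, zero_mul]
            · rw [hWb (j-1) m (by have := hj h1; omega), mul_zero]
      _ = ∑ j ∈ F, L j n * (tφ φ j * ppow Lb k (j+1) m - tφ φ (j-1) * ppow Lb k (j-1) m) := by
          rw [← Finset.sum_sub_distrib]
          exact Finset.sum_congr rfl (fun j _ => by ring)
      _ = ∑ j ∈ F, L j n * (ppow L k (m-1) j * tφ φ (m-1) - ppow L k (m+1) j * tφ φ m) :=
          Finset.sum_congr rfl (fun j _ => by rw [ihe j m])
      _ = (∑ j ∈ F, ppow L k (m-1) j * L j n) * tφ φ (m-1)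
          - (∑ j ∈ F, ppow L k (m+1) j * L j n) * tφ φ m := by
          rw [Finset.sum_mul, Finset.sum_mul, ← Finset.sum_sub_distrib]
          exact Finset.sum_congr rfl (fun j _ => by ring)


/-- the anti-symmetry identity for the generators `A_k = B_k - B̄_k`
under the constraint of type B. -/
theorem typeB_generator_antisymmetry
    (L Lb : PDO) (φ : ℤ → ℂ)
    (hpair : IsStandardPair L Lb)
    (hconstr : pmul (Tmat φ - padj (Tmat φ)) Lb
      = pmul (padj L) (Tmat φ - padj (Tmat φ))) :
    ∀ k : ℕ, 1 ≤ k →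
      pmul (Tmat φ - padj (Tmat φ)) (Aop L Lb k)
        + pmul (padj (Aop L Lb k)) (Tmat φ - padj (Tmat φ))
      = pmul (Phibarop Lb k) (Tmat φ)
        - pmul (Tmat φ) (Phiop L k)
        + pmul (Phiop L k) (padj (Tmat φ))
        - pmul (padj (Tmat φ)) (Phibarop Lb k) := by
  obtain ⟨hL, hL1, hLb⟩ := hpair
  intro k hk
  have hstar := constr_pow L Lb φ hL hLb hconstr k
  have he : ∀ a b : ℤ, tφ φ a * ppow Lb k (a+1) b - tφ φ (a-1) * ppow Lb k (a-1) b
      = ppow L k (b-1) a * tφ φ (b-1) - ppow L k (b+1) a * tφ φ b := by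
    intro a b
    have h := congrFun (congrFun hstar a) b
    rw [S_mul_apply, mul_S_apply] at h
    simpa [padj] using h
  funext n m
  simp only [Pi.add_apply, Pi.sub_apply]
  rw [S_mul_apply, mul_S_apply, mul_T_apply, T_mul_apply, mul_Tadj_apply, Tadj_mul_apply]
  simp only [padj, Aop, Bop, Bbarop, Phiop, Phibarop, pplus, pminus, pzero, Pi.sub_apply]
  rcases lt_trichotomy (n+1) m with hcase | hcase | hcase
  · simp only [if_pos hcase, if_pos (show n - 1 < m by omega), if_pos (show n < m - 1 by omega),
      if_pos (show n < m + 1 by omega), if_neg (show ¬ m < n + 1 by omega),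
      if_neg (show ¬ m < n - 1 by omega), if_neg (show ¬ m - 1 < n by omega),
      if_neg (show ¬ m + 1 < n by omega), if_neg (show ¬ n = m - 1 by omega),
      if_neg (show ¬ n + 1 = m by omega), if_neg (show ¬ n = m + 1 by omega),
      if_neg (show ¬ n - 1 = m by omega)]
    linear_combination he m n
  · subst hcase
    have H := he (n+1) n
    simp only [Int.add_sub_cancel] at H ⊢
    simp only [if_pos (show n - 1 < n + 1 by omega), if_pos (show n < n + 1 + 1 by omega),
      if_pos (show n = n from rfl), if_pos (show n + 1 = n + 1 from rfl), ite_true,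
      if_neg (show ¬ n + 1 < n + 1 by omega), if_neg (show ¬ n < n by omega),
      if_neg (show ¬ n + 1 < n - 1 by omega), if_neg (show ¬ n + 1 + 1 < n by omega),
      if_neg (show ¬ n = n + 1 + 1 by omega), if_neg (show ¬ n - 1 = n + 1 by omega)]
    linear_combination H
  · rcases lt_trichotomy (m+1) n with hc2 | hc2 | hc2
    · simp only [if_pos (show m < n + 1 by omega), if_pos (show m < n - 1 by omega),
        if_pos (show m - 1 < n by omega), if_pos (show m + 1 < n by omega),
        if_neg (show ¬ n + 1 < m by omega), if_neg (show ¬ n - 1 < m by omega),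
        if_neg (show ¬ n < m - 1 by omega), if_neg (show ¬ n < m + 1 by omega),
        if_neg (show ¬ n = m - 1 by omega), if_neg (show ¬ n + 1 = m by omega),
        if_neg (show ¬ n = m + 1 by omega), if_neg (show ¬ n - 1 = m by omega)]
      linear_combination (-1 : ℂ) * he n m
    · subst hc2
      have H := he (m+1) m
      simp only [Int.add_sub_cancel] at H ⊢
      simp only [if_pos (show m < m + 1 + 1 by omega), if_pos (show m - 1 < m + 1 by omega),
        if_pos (show m + 1 = m + 1 from rfl), if_pos (show m = m from rfl), ite_true,
        if_neg (show ¬ m + 1 + 1 < m by omega), if_neg (show ¬ m < m by omega),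
        if_neg (show ¬ m + 1 < m - 1 by omega), if_neg (show ¬ m + 1 < m + 1 by omega),
        if_neg (show ¬ m + 1 = m - 1 by omega), if_neg (show ¬ m + 1 + 1 = m by omega)]
      linear_combination (-1 : ℂ) * H
    · have hmn : m = n := by omega
      subst hmn
      simp only [if_pos (show m < m + 1 by omega), if_pos (show m - 1 < m by omega),
        if_neg (show ¬ m + 1 < m by omega), if_neg (show ¬ m < m - 1 by omega),
        if_neg (show ¬ m < m - 1 by omega), if_neg (show ¬ m = m - 1 by omega),
        if_neg (show ¬ m + 1 = m by omega), if_neg (show ¬ m = m + 1 by omega),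
        if_neg (show ¬ m - 1 = m by omega)]
      ring
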